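/- For all z ∈ ℍ: 0 < inf supp(μ_Σ) ≤ δ·Im m1(z)/Im m(z) ≤ sup supp(μ_Σ). Moreover, for each bounded 𝒟 ⊂ ℍ there exists a constant K₁, depending only on 𝒟, μ_Σ, and μ_T, such that Im(z·m2(z)) ≤ K₁·Im m1(z) for all z ∈ 𝒟. -/

import Mathlib

open MeasureTheory ProbabilityTheory Filter Topology
open scoped ENNReal NNReal

noncomputable section

namespace SpecGLM

/-- The (topological) support of a measure on `ℝ`. -/
def msupport (μ : Measure ℝ) : Set ℝ := {x | ∀ U ∈ nhds x, μ U ≠ 0}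

/-- `k`-th largest eigenvalue (1-indexed) of a real symmetric matrix; junk value `0`
if the matrix is not symmetric. -/
def lambdaK {d : ℕ} (A : Matrix (Fin d) (Fin d) ℝ) (k : ℕ) : ℝ := by
  classical
  exact if hA : A.IsHermitian then
    (((List.ofFn hA.eigenvalues).insertionSort (· ≥ ·)).getD (k - 1) 0)
  else 0

/-- Empirical distribution of a finite family of real numbers. -/
def esdVec {n : ℕ} (v : Fin n → ℝ) : Measure ℝ :=
  (n : ℝ≥0∞)⁻¹ • ∑ i, Measure.dirac (v i)

/-- Empirical spectral distribution of a real symmetric matrix. -/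
def esd {d : ℕ} (A : Matrix (Fin d) (Fin d) ℝ) : Measure ℝ := by
  classical
  exact if hA : A.IsHermitian then esdVec hA.eigenvalues else 0

/-- Weak convergence of a sequence of measures on `ℝ`. -/
def WeakTendsto (ν : ℕ → Measure ℝ) (ν' : Measure ℝ) : Prop :=
  ∀ f : BoundedContinuousFunction ℝ ℝ,
    Tendsto (fun k => ∫ x, f x ∂(ν k)) atTop (𝓝 (∫ x, f x ∂ν'))

/-- Convergence in probability of a sequence of real random variables to a constant. -/
def TendstoInProbability {Ω : Type*} [MeasurableSpace Ω] (μ : Measure Ω)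
    (X : ℕ → Ω → ℝ) (c : ℝ) : Prop :=
  ∀ ε : ℝ, 0 < ε → Tendsto (fun k => μ {ω | ε ≤ |X k ω - c|}) atTop (𝓝 0)

/-- Almost sure convergence of a sequence of real random variables to a constant. -/
def TendstoAlmostSurely {Ω : Type*} [MeasurableSpace Ω] (μ : Measure Ω)
    (X : ℕ → Ω → ℝ) (c : ℝ) : Prop :=
  ∀ᵐ ω ∂μ, Tendsto (fun k => X k ω) atTop (𝓝 c)

/-- Pseudo-Lipschitz functions of finite order. -/
def PseudoLipschitz (f : ℝ → ℝ) : Prop :=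
  ∃ (j : ℕ) (L : ℝ), ∀ x y : ℝ,
    |f x - f y| ≤ L * |x - y| * (1 + |x| ^ (j - 1) + |y| ^ (j - 1))

/-- A finite family of real random variables is i.i.d. with common law `ν`. -/
def IIDLaw {Ω : Type*} [MeasurableSpace Ω] (μ : Measure Ω) {ι : Type*} [Fintype ι]
    (f : ι → Ω → ℝ) (ν : Measure ℝ) : Prop :=
  (∀ i, Measurable (f i)) ∧ (∀ i, Measure.map (f i) μ = ν) ∧
    iIndepFun f μ

/-- The positive semidefinite square root of a matrix (junk value `0` if not psd). -/
def sqrtMat {d : ℕ} (A : Matrix (Fin d) (Fin d) ℝ) : Matrix (Fin d) (Fin d) ℝ := by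
  classical
  exact if hA : A.PosSemidef then
    hA.1.eigenvectorUnitary.1 * Matrix.diagonal (fun i => Real.sqrt (hA.1.eigenvalues i)) *
      (star hA.1.eigenvectorUnitary : Matrix (Fin d) (Fin d) ℝ) else 0

/-- Euclidean norm of a vector. -/
def vnorm {d : ℕ} (v : Fin d → ℝ) : ℝ := Real.sqrt (∑ i, v i ^ 2)

/-- Euclidean inner product. -/
def dot {d : ℕ} (u v : Fin d → ℝ) : ℝ := ∑ i, u i * v i

/-- A probability space bundled as a structure. -/
structure ProbSpace where
  carrier : Type
  inst : MeasurableSpace carrier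
  meas : @Measure carrier inst
  prob : @IsProbabilityMeasure carrier inst meas

attribute [instance] ProbSpace.inst ProbSpace.prob

end SpecGLM
namespace SpecGLM

/-- The complex upper half-plane. -/
def UH : Set ℂ := {z | 0 < z.im}

/-- Meromorphy at a point: some power of `(· - z)` times `f` is analytic at `z`. -/
def MeroAt (f : ℂ → ℂ) (z : ℂ) : Prop :=
  ∃ k : ℕ, AnalyticAt ℂ (fun w => (w - z) ^ k * f w) z

/-- Data for the deterministic random-matrix system: aspect ratio and the limiting
spectral distributions `μ_T`, `μ_Σ`. -/
structure RMT where
  delta : ℝ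
  muT : Measure ℝ
  muS : Measure ℝ

namespace RMT

variable (R : RMT)

/-- `sup supp μ_T`. -/
def tauT : ℝ := sSup (msupport R.muT)

/-- `sup supp μ_Σ`. -/
def sSig : ℝ := sSup (msupport R.muS)

/-- `inf supp μ_Σ`. -/
def iSig : ℝ := sInf (msupport R.muS)

/-- `∫ s dμ_Σ(s)`. -/
def meanS : ℝ := ∫ s, s ∂(R.muS)

/-- `c(a) = ∫ t/(a - t) dμ_T(t)`. -/
def cfun (a : ℝ) : ℝ := ∫ t, t / (a - t) ∂(R.muT)

/-- The left end `s(a)` of the admissible interval for `γ(a)`. -/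
def sfun (a : ℝ) : ℝ :=
  if 0 < R.cfun a then R.cfun a * R.sSig
  else if R.cfun a < 0 then R.cfun a * R.iSig else 0

/-- `γ(a)` is the unique solution in `(s(a), ∞)` of
`1 = (1/δ) ∫ s/(γ(a) - c(a)s) dμ_Σ(s)`. -/
def IsGammaFun (γ : ℝ → ℝ) : Prop :=
  ∀ a, R.tauT < a →
    R.sfun a < γ a ∧ 1 = (1 / R.delta) * ∫ s, s / (γ a - R.cfun a * s) ∂(R.muS) ∧
      ∀ g, R.sfun a < g →
        1 = (1 / R.delta) * ∫ s, s / (g - R.cfun a * s) ∂(R.muS) → g = γ a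

/-- Basic assumptions on the data. -/
def Basic : Prop :=
  0 < R.delta ∧ IsProbabilityMeasure R.muT ∧ IsProbabilityMeasure R.muS ∧
    (∃ C : ℝ, msupport R.muT ⊆ Set.Icc (-C) C) ∧
    (∃ l u : ℝ, 0 < l ∧ msupport R.muS ⊆ Set.Icc l u) ∧
    R.muT ≠ Measure.dirac 0 ∧ R.muS ≠ Measure.dirac 0 ∧ 0 < R.tauT

/-- Thick-edge assumptions. -/
def ThickEdge : Prop :=
  Tendsto (fun a => ∫ t, t / (a - t) ∂(R.muT)) (𝓝[>] R.tauT) atTop ∧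
  Tendsto (fun a => ∫ t, t ^ 2 / (a - t) ^ 2 ∂(R.muT)) (𝓝[>] R.tauT) atTop ∧
  Tendsto (fun w => |∫ s, s / (s - w) ∂(R.muS)|) (𝓝[>] R.sSig) atTop ∧
  Tendsto (fun w => ∫ s, s ^ 2 / (s - w) ^ 2 ∂(R.muS)) (𝓝[>] R.sSig) atTop ∧
  Tendsto (fun w => ∫ s, s ^ 3 / (s - w) ^ 2 ∂(R.muS)) (𝓝[>] R.sSig) atTop ∧
  Tendsto (fun w => |∫ s, s / (s - w) ∂(R.muS)|) (𝓝[<] R.iSig) atTop ∧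
  Tendsto (fun w => ∫ s, s ^ 2 / (s - w) ^ 2 ∂(R.muS)) (𝓝[<] R.iSig) atTop ∧
  Tendsto (fun w => ∫ s, s ^ 3 / (s - w) ^ 2 ∂(R.muS)) (𝓝[<] R.iSig) atTop

/-- The system of equations satisfied by `(m(z), m₁(z), m₂(z))` at `z`. -/
def SystemEqAt (z w w1 w2 : ℂ) : Prop :=
  (-(z * w) = (1 - (R.delta : ℂ)) +
      (R.delta : ℂ) * ∫ t, (1 + w1 * (t : ℂ))⁻¹ ∂(R.muT)) ∧
  (-(z * w) = ∫ s, (1 + w2 * (s : ℂ))⁻¹ ∂(R.muS)) ∧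
  (-(z * w) = 1 + (R.delta : ℂ) * z * w1 * w2)

/-- `(m, m₁, m₂)` is the (unique) solution of the system, subject to
`m(z) ∈ ℍ`, `m₁(z) ∈ ℍ`, `z m₂(z) ∈ ℍ`. -/
def IsSystemSolution (m m1 m2 : ℂ → ℂ) : Prop :=
  ∀ z ∈ UH,
    m z ∈ UH ∧ m1 z ∈ UH ∧ z * m2 z ∈ UH ∧ R.SystemEqAt z (m z) (m1 z) (m2 z) ∧
    ∀ w w1 w2 : ℂ, w ∈ UH → w1 ∈ UH → z * w2 ∈ UH → R.SystemEqAt z w w1 w2 →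
      w = m z ∧ w1 = m1 z ∧ w2 = m2 z

/-- `I₁(z, z̄) = ∫ t²/|1 + m₁(z)t|² dμ_T(t)`. -/
def I1sq (m1 : ℂ → ℂ) (z : ℂ) : ℝ :=
  ∫ t, t ^ 2 / Complex.normSq (1 + m1 z * (t : ℂ)) ∂(R.muT)

/-- `I₂(z, z̄) = ∫ s²/|1 + m₂(z)s|² dμ_Σ(s)`. -/
def I2sq (m2 : ℂ → ℂ) (z : ℂ) : ℝ :=
  ∫ s, s ^ 2 / Complex.normSq (1 + m2 z * (s : ℂ)) ∂(R.muS)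

end RMT

/-- `m` is the Stieltjes transform of the measure `ν` on `ℝ`. -/
def IsStieltjesOf (ν : Measure ℝ) (m : ℂ → ℂ) : Prop :=
  ∀ z ∈ UH, m z = ∫ x, ((x : ℂ) - z)⁻¹ ∂ν

end SpecGLM
namespace SpecGLM


lemma ae_mem_msupport (μ : Measure ℝ) : ∀ᵐ x ∂μ, x ∈ msupport μ := by
  obtain ⟨b, hbc, -, hb⟩ := TopologicalSpace.exists_countable_basis ℝ
  have hnull : μ (⋃₀ {U ∈ b | μ U = 0}) = 0 := by
    rw [measure_sUnion_null_iff (hbc.mono (Set.sep_subset _ _))]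
    exact fun s hs => hs.2
  have hsub : (msupport μ)ᶜ ⊆ ⋃₀ {U ∈ b | μ U = 0} := by
    intro x hx
    simp only [msupport, Set.mem_compl_iff, Set.mem_setOf_eq, not_forall] at hx
    obtain ⟨V, hV, hVm⟩ := hx
    obtain ⟨U, hUb, hxU, hUV⟩ := hb.mem_nhds_iff.mp hV
    exact ⟨U, ⟨hUb, le_antisymm ((measure_mono hUV).trans_eq (not_not.mp hVm)) zero_le⟩, hxU⟩
  exact (MeasureTheory.ae_iff.mpr (measure_mono_null hsub hnull)).mono (fun x hx => hx)

lemma inv_sub_one' {w : ℂ} (hw : w ≠ 0) : w⁻¹ - 1 = (1 - w) * w⁻¹ := by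
  rw [sub_mul, one_mul, mul_inv_cancel₀ hw]

lemma mul_inv_sub_one' {z w : ℂ} (hw : w ≠ 0) : z * w⁻¹ - 1 = (z - w) * w⁻¹ := by
  rw [sub_mul, mul_inv_cancel₀ hw]

lemma integral_cim {α : Type*} [MeasurableSpace α] {μ : Measure α} {f : α → ℂ}
    (hf : Integrable f μ) : (∫ x, f x ∂μ).im = ∫ x, (f x).im ∂μ := by
  have := integral_im (μ := μ) (f := f) hf
  simp only [RCLike.im_eq_complex_im] at this
  exact this.symm

lemma integrable_cim {α : Type*} [MeasurableSpace α] {μ : Measure α} {f : α → ℂ}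
    (hf : Integrable f μ) : Integrable (fun x => (f x).im) μ := by
  have := hf.im
  simpa [RCLike.im_eq_complex_im] using this

lemma sq_integral_le {α : Type*} [MeasurableSpace α] (μ : Measure α) [IsProbabilityMeasure μ]
    {f : α → ℝ} (hf : Integrable f μ) (hf2 : Integrable (fun x => f x ^ 2) μ) :
    (∫ x, f x ∂μ) ^ 2 ≤ ∫ x, f x ^ 2 ∂μ := by
  set c := ∫ x, f x ∂μ with hc
  have key : ∫ x, (f x - c) ^ 2 ∂μ = (∫ x, f x ^ 2 ∂μ) - c ^ 2 := by
    have h1 : ∀ x, (f x - c) ^ 2 = (f x ^ 2 - (2 * c) * f x) + c ^ 2 := fun x => by ring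
    simp_rw [h1]
    rw [integral_add (f := fun x => f x ^ 2 - (2*c) * f x) (g := fun _ => c ^ 2)
        (by exact hf2.sub (hf.const_mul _)) (integrable_const _),
      integral_sub hf2 (hf.const_mul _), MeasureTheory.integral_const_mul, integral_const]
    simp [measure_univ, ← hc]
    ring
  have h0 : 0 ≤ ∫ x, (f x - c) ^ 2 ∂μ := integral_nonneg fun x => sq_nonneg _
  linarith [key ▸ h0]

set_option maxHeartbeats 1000000 in
/-- **Lemma (comparison of imaginary parts).** For all `z ∈ ℍ`,
`0 < inf supp μ_Σ ≤ δ Im m₁(z)/Im m(z) ≤ sup supp μ_Σ`; moreover for every bounded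
`𝒟 ⊂ ℍ` there is a constant `K₁` with `Im(z m₂(z)) ≤ K₁ Im m₁(z)` on `𝒟`. -/
theorem imaginary_parts_comparison
    (R : RMT) (hB : R.Basic)
    (m m1 m2 : ℂ → ℂ) (hsol : R.IsSystemSolution m m1 m2) :
    (∀ z ∈ UH,
      0 < R.iSig ∧
      R.iSig ≤ R.delta * (m1 z).im / (m z).im ∧
      R.delta * (m1 z).im / (m z).im ≤ R.sSig) ∧
    (∀ 𝒟 : Set ℂ, 𝒟 ⊆ UH → Bornology.IsBounded 𝒟 →
      ∃ K1 : ℝ, ∀ z ∈ 𝒟, (z * m2 z).im ≤ K1 * (m1 z).im) := by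
  classical
  obtain ⟨hδ, hPT, hPS, ⟨C, hCsupp⟩, ⟨l, u, hl, hlu⟩, -, -, -⟩ := hB
  haveI := hPT; haveI := hPS
  have hS_ae : ∀ᵐ s ∂(R.muS), s ∈ msupport R.muS := ae_mem_msupport _
  have hT_ae : ∀ᵐ t ∂(R.muT), t ∈ msupport R.muT := ae_mem_msupport _
  have hne : (msupport R.muS).Nonempty := by
    rcases Set.eq_empty_or_nonempty (msupport R.muS) with h | h
    · exfalso
      have h2 : ∀ᵐ s ∂(R.muS), False := by simpa [h] using hS_ae
      have h1 : R.muS Set.univ = 0 := by simpa [MeasureTheory.ae_iff] using h2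
      simp [measure_univ] at h1
    · exact h
  have hbdd_b : BddBelow (msupport R.muS) := ⟨l, fun s hs => (hlu hs).1⟩
  have hbdd_a : BddAbove (msupport R.muS) := ⟨u, fun s hs => (hlu hs).2⟩
  have hiSig : 0 < R.iSig := lt_of_lt_of_le hl (le_csInf hne (fun s hs => (hlu hs).1))
  set C' : ℝ := max C 1 with hC'def
  have hC1 : (1:ℝ) ≤ C' := le_max_right _ _
  have hC0 : (0:ℝ) < C' := lt_of_lt_of_le one_pos hC1
  have hT_bd : ∀ᵐ t ∂(R.muT), |t| ≤ C' := hT_ae.mono (fun t ht => abs_le.mpr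
    ⟨le_trans (neg_le_neg (le_max_left C 1)) (hCsupp ht).1,
     le_trans (hCsupp ht).2 (le_max_left C 1)⟩)
  set K1 : ℝ := 4 * C' ^ 2 * (1 + 1 / R.delta) with hK1def
  have main : ∀ z ∈ UH,
      (R.iSig * (m z).im ≤ R.delta * (m1 z).im ∧
        R.delta * (m1 z).im ≤ R.sSig * (m z).im) ∧
      (z * m2 z).im ≤ K1 * (m1 z).im := by
    intro z hz
    obtain ⟨hm, hm1, hzm2, ⟨hE1, hE2, hE3⟩, -⟩ := hsol z hz
    have hzim : 0 < z.im := hz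
    have hmim : 0 < (m z).im := hm
    have hm1im : 0 < (m1 z).im := hm1
    set ζ : ℂ := z * m2 z with hζdef
    have hζim : 0 < ζ.im := hzm2
    have hz0 : z ≠ 0 := fun h => by rw [h] at hzim; simp at hzim
    have hζ0 : ζ ≠ 0 := fun h => by rw [h] at hζim; simp at hζim
    have hm10 : m1 z ≠ 0 := fun h => by rw [h] at hm1im; simp at hm1im
    have hδ0 : (R.delta : ℂ) ≠ 0 := Complex.ofReal_ne_zero.mpr hδ.ne'
    set G : ℝ → ℂ := fun s => (z + s * ζ)⁻¹ with hGdef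
    set N : ℝ → ℝ := fun s => Complex.normSq (z + s * ζ) with hNdef
    have hGim : ∀ s : ℝ, (z + s * ζ).im = z.im + s * ζ.im := by
      intro s; simp [Complex.add_im, Complex.mul_im]
    have hGlb : ∀ s : ℝ, 0 ≤ s → z.im ≤ ‖z + s * ζ‖ := by
      intro s hs
      calc z.im ≤ (z + s * ζ).im := by
            rw [hGim]; nlinarith [mul_nonneg hs hζim.le]
      _ ≤ |(z + s * ζ).im| := le_abs_self _
      _ ≤ ‖z + s * ζ‖ := Complex.abs_im_le_norm _
    have hGne : ∀ s : ℝ, 0 ≤ s → z + s * ζ ≠ 0 := by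
      intro s hs h0
      have h1 := hGlb s hs
      rw [h0] at h1; simp at h1; linarith
    have hGnorm : ∀ s : ℝ, 0 ≤ s → ‖G s‖ ≤ z.im⁻¹ := by
      intro s hs
      simp only [hGdef, norm_inv]
      exact inv_anti₀ hzim (hGlb s hs)
    have hGmeas : Measurable G := by
      simp only [hGdef]
      exact (measurable_const.add (Complex.measurable_ofReal.mul measurable_const)).inv
    have hS_pos : ∀ᵐ s ∂(R.muS), l ≤ s ∧ s ≤ u :=
      hS_ae.mono (fun s hs => ⟨(hlu hs).1, (hlu hs).2⟩)
    have hGint : Integrable G R.muS := by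
      refine Integrable.mono' (integrable_const (z.im⁻¹)) hGmeas.aestronglyMeasurable ?_
      exact hS_pos.mono (fun s hs => hGnorm s (le_trans hl.le hs.1))
    have hsGint : Integrable (fun (s : ℝ) => (s:ℂ) * G s) R.muS := by
      refine Integrable.mono' (integrable_const (u * z.im⁻¹))
        ((Complex.measurable_ofReal.mul hGmeas).aestronglyMeasurable)
        (hS_pos.mono (fun s hs => ?_))
      have h0s : (0:ℝ) ≤ s := le_trans hl.le hs.1
      have hns : ‖(s:ℂ)‖ = s := by
        simp [abs_of_nonneg h0s]
      rw [norm_mul, hns]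
      exact mul_le_mul hs.2 (hGnorm s h0s) (norm_nonneg _) (le_trans h0s hs.2)
    have hg2G : ∀ s : ℝ, (1 + m2 z * (s:ℂ))⁻¹ = z * G s := by
      intro s
      have h1 : (1 + m2 z * (s:ℂ)) = z⁻¹ * (z + s * ζ) := by
        rw [hζdef, show z + (s:ℂ) * (z * m2 z) = z * (1 + m2 z * s) from by ring,
          ← mul_assoc, inv_mul_cancel₀ hz0, one_mul]
      rw [h1, mul_inv, inv_inv, hGdef]
    have hIz : ∫ s, (1 + m2 z * (s:ℂ))⁻¹ ∂(R.muS) = z * ∫ s, G s ∂(R.muS) := by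
      simp_rw [hg2G]; exact MeasureTheory.integral_const_mul z G
    have hmz : m z = -∫ s, G s ∂(R.muS) := by
      apply mul_left_cancel₀ hz0
      rw [← neg_neg (z * m z), hE2, hIz]; ring
    have hzmG : -(z * m z) = z * ∫ s, G s ∂(R.muS) := by rw [hE2, hIz]
    have h3 : ∫ s, (z * G s - 1) ∂(R.muS) = -(ζ * ∫ s : ℝ, (s:ℂ) * G s ∂(R.muS)) := by
      rw [← MeasureTheory.integral_const_mul ζ, ← integral_neg]
      refine integral_congr_ae (hS_pos.mono (fun s hs => ?_))
      have h0s : (0:ℝ) ≤ s := le_trans hl.le hs.1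
      have hne0 := hGne s h0s
      simp only [hGdef]
      rw [mul_inv_sub_one' hne0]
      ring
    have h7 : ∫ s, (z * G s - 1) ∂(R.muS) = z * (∫ s, G s ∂(R.muS)) - 1 := by
      rw [integral_sub (hGint.const_mul z) (integrable_const _),
        MeasureTheory.integral_const_mul, integral_const]
      simp [measure_univ]
    have h6 : (1:ℂ) + (R.delta:ℂ) * z * m1 z * m2 z = z * ∫ s, G s ∂(R.muS) :=
      hE3.symm.trans hzmG
    have h4 : (R.delta:ℂ) * z * m1 z * m2 z = -(ζ * ∫ s : ℝ, (s:ℂ) * G s ∂(R.muS)) := by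
      rw [← h3, h7]
      linear_combination h6
    have hδm1 : (R.delta : ℂ) * m1 z = -∫ s : ℝ, (s:ℂ) * G s ∂(R.muS) := by
      apply mul_left_cancel₀ hζ0
      calc ζ * ((R.delta:ℂ) * m1 z) = (R.delta:ℂ) * z * m1 z * m2 z := by
            rw [hζdef]; ring
      _ = -(ζ * ∫ s : ℝ, (s:ℂ) * G s ∂(R.muS)) := h4
      _ = ζ * (-∫ s : ℝ, (s:ℂ) * G s ∂(R.muS)) := by ring
    have hpt1 : ∀ s : ℝ, (-(G s)).im = (z.im + s * ζ.im) / N s := by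
      intro s
      simp only [hGdef, hNdef, Complex.neg_im, Complex.inv_im]
      rw [hGim s]
      ring
    have hpt2 : ∀ s : ℝ, (-((s:ℂ) * G s)).im = s * ((z.im + s * ζ.im) / N s) := by
      intro s
      have h9 := hpt1 s
      simp only [Complex.neg_im, Complex.mul_im, Complex.ofReal_re, Complex.ofReal_im, zero_mul, add_zero] at h9 ⊢
      rw [← h9]; ring
    have him : (m z).im = ∫ s, (z.im + s * ζ.im) / N s ∂(R.muS) := by
      rw [hmz, ← integral_neg, integral_cim hGint.neg']
      exact integral_congr_ae (Filter.Eventually.of_forall hpt1)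
    have him1 : R.delta * (m1 z).im = ∫ s, s * ((z.im + s * ζ.im) / N s) ∂(R.muS) := by
      have h8 : ((R.delta:ℂ) * m1 z).im = R.delta * (m1 z).im := by
        simp [Complex.mul_im]
      rw [← h8, hδm1, ← integral_neg, integral_cim hsGint.neg']
      exact integral_congr_ae (Filter.Eventually.of_forall hpt2)
    have hWint : Integrable (fun s => (z.im + s * ζ.im) / N s) R.muS := by
      have h9 : (fun s => (z.im + s * ζ.im) / N s) = fun s => (-(G s)).im :=
        funext (fun s => (hpt1 s).symm)
      rw [h9]
      exact integrable_cim hGint.neg'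
    have hsWint : Integrable (fun s => s * ((z.im + s * ζ.im) / N s)) R.muS := by
      have h9 : (fun s => s * ((z.im + s * ζ.im) / N s)) = fun (s : ℝ) => (-((s:ℂ) * G s)).im :=
        funext (fun s => (hpt2 s).symm)
      rw [h9]
      exact integrable_cim hsGint.neg'
    have hWnn : ∀ᵐ s ∂(R.muS), 0 ≤ (z.im + s * ζ.im) / N s ∧ R.iSig ≤ s ∧ s ≤ R.sSig := by
      refine hS_ae.mono (fun s hs => ?_)
      have h0s : (0:ℝ) ≤ s := le_trans hl.le (hlu hs).1
      have hN0 : (0:ℝ) ≤ N s := by simp only [hNdef]; exact Complex.normSq_nonneg _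
      refine ⟨div_nonneg (by nlinarith [mul_nonneg h0s hζim.le]) hN0,
        csInf_le hbdd_b hs, le_csSup hbdd_a hs⟩
    have hlow : R.iSig * (m z).im ≤ R.delta * (m1 z).im := by
      have h10 : R.delta * (m1 z).im - R.iSig * (m z).im =
          ∫ s, (s - R.iSig) * ((z.im + s * ζ.im) / N s) ∂(R.muS) := by
        rw [him, him1, ← MeasureTheory.integral_const_mul R.iSig,
          ← integral_sub hsWint (hWint.const_mul _)]
        exact integral_congr_ae (Filter.Eventually.of_forall (fun s => by ring))
      have h11 : 0 ≤ ∫ s, (s - R.iSig) * ((z.im + s * ζ.im) / N s) ∂(R.muS) := by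
        refine integral_nonneg_of_ae (hWnn.mono (fun s hs => ?_))
        exact mul_nonneg (sub_nonneg.mpr hs.2.1) hs.1
      linarith
    have hupp : R.delta * (m1 z).im ≤ R.sSig * (m z).im := by
      have h10 : R.sSig * (m z).im - R.delta * (m1 z).im =
          ∫ s, (R.sSig - s) * ((z.im + s * ζ.im) / N s) ∂(R.muS) := by
        rw [him, him1, ← MeasureTheory.integral_const_mul R.sSig,
          ← integral_sub (hWint.const_mul _) hsWint]
        exact integral_congr_ae (Filter.Eventually.of_forall (fun s => by ring))
      have h11 : 0 ≤ ∫ s, (R.sSig - s) * ((z.im + s * ζ.im) / N s) ∂(R.muS) := by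
        refine integral_nonneg_of_ae (hWnn.mono (fun s hs => ?_))
        exact mul_nonneg (sub_nonneg.mpr hs.2.2) hs.1
      linarith
    refine ⟨⟨hlow, hupp⟩, ?_⟩
    -- Part 2
    set g1 : ℝ → ℂ := fun t => (1 + m1 z * t)⁻¹ with hg1def
    have hg1ne : ∀ t : ℝ, 1 + m1 z * (t:ℂ) ≠ 0 := by
      intro t h0
      rcases eq_or_ne t 0 with rfl | ht
      · simp at h0
      · have h1 : (1 + m1 z * (t:ℂ)).im = (m1 z).im * t := by
          simp [Complex.add_im, Complex.mul_im]
        rw [h0] at h1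
        rcases mul_eq_zero.mp h1.symm with h | h
        · exact hm1im.ne' h
        · exact ht h
    have htri : ∀ w : ℂ, 1 - ‖w‖ ≤ ‖1 + w‖ := by
      intro w
      have h2 := norm_sub_norm_le (1:ℂ) (-w)
      simpa [sub_neg_eq_add] using h2
    set B : ℝ := max 2 (2 * ‖m1 z‖ / (m1 z).im) with hBdef
    have hB0 : (0:ℝ) ≤ B := le_trans (by norm_num) (le_max_left _ _)
    have hg1bd : ∀ t : ℝ, ‖g1 t‖ ≤ B := by
      intro t
      simp only [hg1def, norm_inv]
      rcases le_or_gt (‖m1 z * (t:ℂ)‖) (1/2) with h | h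
      · have habs : 1/2 ≤ ‖1 + m1 z * (t:ℂ)‖ := by
          have := htri (m1 z * (t:ℂ)); linarith
        have h5 : (‖1 + m1 z * (t:ℂ)‖)⁻¹ ≤ (1/2 : ℝ)⁻¹ :=
          inv_anti₀ (by norm_num) habs
        refine le_trans h5 (le_trans (by norm_num) (le_max_left _ _))
      · have hm1a : 0 < ‖m1 z‖ := by
          simpa [norm_pos_iff] using hm10
        have ht2 : 1/2 < ‖m1 z‖ * |t| := by
          rw [← Real.norm_eq_abs, ← Complex.norm_real, ← norm_mul]; exact h
        have htpos : 0 < |t| := by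
          rcases lt_or_ge 0 |t| with h' | h'
          · exact h'
          · exfalso; nlinarith [mul_nonpos_of_nonneg_of_nonpos hm1a.le h']
        have him' : (m1 z).im * |t| ≤ ‖1 + m1 z * (t:ℂ)‖ := by
          have h1 : (1 + m1 z * (t:ℂ)).im = (m1 z).im * t := by
            simp [Complex.add_im, Complex.mul_im]
          calc (m1 z).im * |t| = |(1 + m1 z * (t:ℂ)).im| := by
                rw [h1, abs_mul, abs_of_pos hm1im]
          _ ≤ ‖1 + m1 z * (t:ℂ)‖ := Complex.abs_im_le_norm _
        have hpos : 0 < (m1 z).im * |t| := mul_pos hm1im htpos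
        have hinv : (‖1 + m1 z * (t:ℂ)‖)⁻¹ ≤ ((m1 z).im * |t|)⁻¹ :=
          inv_anti₀ hpos him'
        refine le_trans hinv (le_trans ?_ (le_max_right _ _))
        have hlb : (m1 z).im / (2 * ‖m1 z‖) ≤ (m1 z).im * |t| := by
          rw [div_le_iff₀ (by positivity)]
          nlinarith [hm1im.le, ht2]
        calc ((m1 z).im * |t|)⁻¹ ≤ ((m1 z).im / (2 * ‖m1 z‖))⁻¹ :=
              inv_anti₀ (by positivity) hlb
        _ = 2 * ‖m1 z‖ / (m1 z).im := by rw [inv_div]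
    have hg1meas : Measurable g1 := by
      simp only [hg1def]
      exact (measurable_const.add (measurable_const.mul Complex.measurable_ofReal)).inv
    have hg1int : Integrable g1 R.muT :=
      Integrable.mono' (integrable_const B) hg1meas.aestronglyMeasurable
        (Filter.Eventually.of_forall hg1bd)
    have htg1int : Integrable (fun (t : ℝ) => (t:ℂ) * g1 t) R.muT := by
      refine Integrable.mono' (integrable_const (C' * B))
        ((Complex.measurable_ofReal.mul hg1meas).aestronglyMeasurable)
        (hT_bd.mono (fun t ht => ?_))
      rw [norm_mul]
      have hnt : ‖(t:ℂ)‖ = |t| := by simp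
      rw [hnt]
      exact mul_le_mul ht (hg1bd t) (norm_nonneg _) hC0.le
    have h13 : (1:ℂ) + (R.delta:ℂ) * z * m1 z * m2 z =
        (1 - (R.delta:ℂ)) + (R.delta:ℂ) * ∫ t, g1 t ∂(R.muT) := hE3.symm.trans hE1
    have h14 : ∫ t, (g1 t - 1) ∂(R.muT) = (∫ t, g1 t ∂(R.muT)) - 1 := by
      rw [integral_sub hg1int (integrable_const _), integral_const]
      simp [measure_univ]
    have h15 : ∫ t, (g1 t - 1) ∂(R.muT) = -(m1 z * ∫ t : ℝ, (t:ℂ) * g1 t ∂(R.muT)) := by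
      rw [← MeasureTheory.integral_const_mul (m1 z), ← integral_neg]
      refine integral_congr_ae (Filter.Eventually.of_forall (fun t => ?_))
      have hne0 := hg1ne t
      simp only [hg1def]
      rw [inv_sub_one' hne0]
      ring
    have h16 : (R.delta:ℂ) * (ζ * m1 z) = (R.delta:ℂ) * ((∫ t, g1 t ∂(R.muT)) - 1) := by
      rw [hζdef]; linear_combination h13
    have hζeq : ζ = -∫ t : ℝ, (t:ℂ) * g1 t ∂(R.muT) := by
      have h12 : (R.delta:ℂ) * (ζ * m1 z) =
          (R.delta:ℂ) * ((-∫ t : ℝ, (t:ℂ) * g1 t ∂(R.muT)) * m1 z) := by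
        rw [h16, ← h14, h15]; ring
      have h17 := mul_left_cancel₀ hδ0 h12
      exact mul_right_cancel₀ hm10 h17
    have hpt3 : ∀ t : ℝ, (-((t:ℂ) * g1 t)).im =
        (m1 z).im * (t^2 / Complex.normSq (1 + m1 z * (t:ℂ))) := by
      intro t
      have him2 : (1 + m1 z * (t:ℂ)).im = (m1 z).im * t := by
        simp [Complex.add_im, Complex.mul_im]
      simp only [hg1def, Complex.neg_im, Complex.mul_im, Complex.ofReal_re, Complex.ofReal_im, Complex.inv_im, him2, zero_mul, add_zero]
      ring
    set I1 : ℝ := ∫ t : ℝ, t^2 / Complex.normSq (1 + m1 z * (t:ℂ)) ∂(R.muT) with hI1def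
    have hζim_eq : ζ.im = (m1 z).im * I1 := by
      rw [hζeq, ← integral_neg, integral_cim htg1int.neg', hI1def,
        ← MeasureTheory.integral_const_mul]
      exact integral_congr_ae (Filter.Eventually.of_forall hpt3)
    rcases le_or_gt (‖m1 z‖) (1/(2*C')) with hcase | hcase
    · -- small |m1|
      have hptbd : ∀ t : ℝ, |t| ≤ C' →
          t^2 / Complex.normSq (1 + m1 z * (t:ℂ)) ≤ 4*C'^2 := by
        intro t ht
        have habsmt : ‖m1 z * (t:ℂ)‖ ≤ 1/2 := by
          rw [norm_mul, Complex.norm_real, Real.norm_eq_abs]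
          calc ‖m1 z‖ * |t| ≤ (1/(2*C')) * C' :=
                mul_le_mul hcase ht (abs_nonneg t) (by positivity)
          _ = 1/2 := by
                rw [div_mul_eq_mul_div, one_mul, mul_comm 2 C', div_mul_eq_div_div,
                  div_self hC0.ne']
        have habs : 1/2 ≤ ‖1 + m1 z * (t:ℂ)‖ := by
          have := htri (m1 z * (t:ℂ)); linarith
        have hN4 : 1/4 ≤ Complex.normSq (1 + m1 z * (t:ℂ)) := by
          rw [← Complex.sq_norm]; nlinarith
        have ht3 : t^2 ≤ C'^2 := by nlinarith [abs_nonneg t, sq_abs t]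
        rw [div_le_iff₀ (by linarith : (0:ℝ) < Complex.normSq (1 + m1 z * (t:ℂ)))]
        nlinarith [mul_le_mul_of_nonneg_left hN4 (by positivity : (0:ℝ) ≤ 4*C'^2)]
      have hI1int : Integrable (fun (t : ℝ) => t^2 / Complex.normSq (1 + m1 z * (t:ℂ))) R.muT := by
        have hmeasI : Measurable (fun t : ℝ => t^2 / Complex.normSq (1 + m1 z * (t:ℂ))) := by
          apply Measurable.div
          · exact measurable_id.pow_const 2
          · exact Complex.continuous_normSq.measurable.comp
              (measurable_const.add (measurable_const.mul Complex.measurable_ofReal))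
        refine Integrable.mono' (integrable_const (4*C'^2)) hmeasI.aestronglyMeasurable
          (hT_bd.mono (fun t ht => ?_))
        rw [Real.norm_eq_abs,
          abs_of_nonneg (div_nonneg (sq_nonneg t) (Complex.normSq_nonneg _))]
        exact hptbd t ht
      have hI1le : I1 ≤ 4 * C'^2 := by
        rw [hI1def]
        calc ∫ t : ℝ, t^2 / Complex.normSq (1 + m1 z * (t:ℂ)) ∂(R.muT) ≤
            ∫ _t, (4*C'^2 : ℝ) ∂(R.muT) := by
              refine integral_mono_ae hI1int (integrable_const _)
                (hT_bd.mono (fun t ht => hptbd t ht))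
        _ = 4*C'^2 := by simp [measure_univ]
      rw [hζim_eq]
      calc (m1 z).im * I1 ≤ (m1 z).im * (4*C'^2) :=
            mul_le_mul_of_nonneg_left hI1le hm1im.le
      _ ≤ K1 * (m1 z).im := by
          rw [hK1def]
          have hd : (0:ℝ) ≤ 1/R.delta := by positivity
          nlinarith [mul_nonneg (mul_nonneg
            (by positivity : (0:ℝ) ≤ 4*C'^2) hd) hm1im.le]
    · -- large |m1|
      set a : ℝ := ‖m1 z‖ with hadef
      have ha0 : 0 < a := by
        rw [hadef]; simpa [norm_pos_iff] using hm10
      have hNmeas : Measurable (fun s : ℝ => s^2 / N s) := by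
        simp only [hNdef]
        exact (measurable_id.pow_const 2).div
          (Complex.continuous_normSq.measurable.comp
            (measurable_const.add (Complex.measurable_ofReal.mul measurable_const)))
      have hNlbs : ∀ᵐ s ∂(R.muS), s^2 / N s ≤ u^2 / z.im^2 := by
        refine hS_pos.mono (fun s hs => ?_)
        have h0s : (0:ℝ) ≤ s := le_trans hl.le hs.1
        have hNlb : z.im^2 ≤ N s := by
          have h1 := hGlb s h0s
          simp only [hNdef]
          rw [← Complex.sq_norm]
          nlinarith [hzim.le]
        have hNpos : 0 < N s := lt_of_lt_of_le (by positivity) hNlb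
        rw [div_le_div_iff₀ hNpos (by positivity)]
        have hsu : s^2 ≤ u^2 := by nlinarith [hs.2, h0s]
        nlinarith [mul_le_mul_of_nonneg_right hsu (sq_nonneg z.im),
          mul_le_mul_of_nonneg_left hNlb (by positivity : (0:ℝ) ≤ u^2)]
      have hJint : Integrable (fun s => s^2 / N s) R.muS := by
        refine Integrable.mono' (integrable_const (u^2/z.im^2)) hNmeas.aestronglyMeasurable
          (hNlbs.mono (fun s hs => ?_))
        have hN0 : (0:ℝ) ≤ N s := by simp only [hNdef]; exact Complex.normSq_nonneg _
        rw [Real.norm_eq_abs, abs_of_nonneg (div_nonneg (sq_nonneg s) hN0)]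
        exact hs
      set f : ℝ → ℝ := fun (s : ℝ) => ‖(s:ℂ) * G s‖ with hfdef
      have hfint : Integrable f R.muS := hsGint.norm
      have hf2eq : ∀ s : ℝ, f s ^ 2 = s^2 / N s := by
        intro s
        have h1 : f s = |s| * (‖z + s*ζ‖)⁻¹ := by
          simp only [hfdef, norm_mul, Complex.norm_real, Real.norm_eq_abs, hGdef,
            norm_inv]
        rw [h1, mul_pow, sq_abs, inv_pow]
        simp only [hNdef]
        rw [← Complex.sq_norm, div_eq_mul_inv]
      have hf2int : Integrable (fun s => f s ^ 2) R.muS := by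
        have h9 : (fun s => f s ^ 2) = fun s => s^2 / N s := funext hf2eq
        rw [h9]; exact hJint
      have hCS := sq_integral_le R.muS hfint hf2int
      have h20 : R.delta * a ≤ ∫ s, f s ∂(R.muS) := by
        have e1 : ‖(R.delta:ℂ) * m1 z‖ = R.delta * a := by
          rw [norm_mul, Complex.norm_real, Real.norm_eq_abs,
            abs_of_pos hδ, hadef]
        rw [← e1, hδm1, norm_neg]
        exact norm_integral_le_integral_norm _
      have hJlb : (R.delta * a)^2 ≤ ∫ s, s^2 / N s ∂(R.muS) := by
        calc (R.delta * a)^2 ≤ (∫ s, f s ∂(R.muS))^2 :=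
              pow_le_pow_left₀ (by positivity) h20 2
        _ ≤ ∫ s, f s ^ 2 ∂(R.muS) := hCS
        _ = ∫ s, s^2 / N s ∂(R.muS) :=
              integral_congr_ae (Filter.Eventually.of_forall hf2eq)
      have h21 : ζ.im * (∫ s, s^2 / N s ∂(R.muS)) ≤ R.delta * (m1 z).im := by
        rw [him1, ← MeasureTheory.integral_const_mul]
        refine integral_mono_ae (hJint.const_mul _) hsWint (hS_pos.mono (fun s hs => ?_))
        have h0s : (0:ℝ) ≤ s := le_trans hl.le hs.1
        have hN0 : (0:ℝ) ≤ N s := by simp only [hNdef]; exact Complex.normSq_nonneg _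
        show ζ.im * (s^2 / N s) ≤ s * ((z.im + s * ζ.im) / N s)
        rw [show ζ.im * (s^2 / N s) = ζ.im * s^2 / N s from by ring,
          show s * ((z.im + s * ζ.im) / N s) = (s * z.im + ζ.im * s^2) / N s from by ring,
          div_eq_mul_inv, div_eq_mul_inv]
        exact mul_le_mul_of_nonneg_right
          (by nlinarith [mul_nonneg h0s hzim.le]) (inv_nonneg.mpr hN0)
      have h22 : 1 < 2*C'*a := by
        rw [div_lt_iff₀ (by positivity : (0:ℝ) < 2*C')] at hcase
        linarith [hcase]
      have h23 : ζ.im * (R.delta^2 * a^2) ≤ R.delta * (m1 z).im := by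
        refine le_trans ?_ h21
        have e2 : R.delta^2 * a^2 = (R.delta*a)^2 := by ring
        rw [e2]
        exact mul_le_mul_of_nonneg_left hJlb hζim.le
      have h25 : (1:ℝ) ≤ 4*C'^2*a^2 := by
        nlinarith [h22, sq_nonneg (2*C'*a - 1)]
      have h27 : ζ.im * R.delta^2 ≤ 4*C'^2 * (R.delta * (m1 z).im) := by
        calc ζ.im * R.delta^2 = ζ.im * R.delta^2 * 1 := by ring
        _ ≤ ζ.im * R.delta^2 * (4*C'^2*a^2) :=
            mul_le_mul_of_nonneg_left h25 (mul_nonneg hζim.le (sq_nonneg _))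
        _ = 4*C'^2 * (ζ.im * (R.delta^2 * a^2)) := by ring
        _ ≤ 4*C'^2 * (R.delta * (m1 z).im) :=
            mul_le_mul_of_nonneg_left h23 (by positivity)
      have h28 : ζ.im * R.delta ≤ 4*C'^2*(m1 z).im := by
        apply le_of_mul_le_mul_left _ hδ
        calc R.delta * (ζ.im * R.delta) = ζ.im * R.delta^2 := by ring
        _ ≤ 4*C'^2*(R.delta*(m1 z).im) := h27
        _ = R.delta * (4*C'^2*(m1 z).im) := by ring
      have h29 : ζ.im ≤ 4*C'^2/R.delta * (m1 z).im := by
        rw [div_mul_eq_mul_div, le_div_iff₀ hδ]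
        linarith [h28]
      refine le_trans h29 ?_
      have h30 : 4*C'^2/R.delta ≤ K1 := by
        rw [hK1def]
        have e3 : 4*C'^2*(1+1/R.delta) = 4*C'^2 + 4*C'^2/R.delta := by
          field_simp
        rw [e3]
        nlinarith [sq_nonneg C']
      exact mul_le_mul_of_nonneg_right h30 hm1im.le
  refine ⟨fun z hz => ?_, fun 𝒟 h𝒟 _ => ⟨K1, fun z hz => (main z (h𝒟 hz)).2⟩⟩
  obtain ⟨hm, -, -, -, -⟩ := hsol z hz
  have hmim : 0 < (m z).im := hm
  obtain ⟨⟨h1, h2⟩, -⟩ := main z hz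
  exact ⟨hiSig, (le_div_iff₀ hmim).mpr h1, (div_le_iff₀ hmim).mpr h2⟩


end SpecGLM
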